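/- Let T > 0. There exists λ₀ ≥ 1, depending only on T, with the following property: for all λ ≥ λ₀, all h > 0, all B ≥ 0, and every continuous function L : [0, λh] → ℝ satisfying (i) 0 ≤ L(r) ≤ B h² for all r ∈ [0, λh], and (ii) L(r) ≥ L(0) − B λ^{-1} h r + T h^{-2} ∫₀^r ∫₀^s L(t) dt ds for all r ∈ [0, λh], one has L(0) ≤ (2/√T + 1) B λ^{-1} h². -/

import Mathlib

open MeasureTheory intervalIntegral Finset

lemma emc_int_sum_monomial (f : ℕ → ℝ) (e : ℕ → ℕ) (n : ℕ) (s : ℝ) :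
    ∫ t in (0:ℝ)..s, ∑ k ∈ range n, f k * t ^ (e k)
      = ∑ k ∈ range n, f k / (e k + 1) * s ^ (e k + 1) := by
  rw [intervalIntegral.integral_finset_sum (f := fun k t => f k * t ^ (e k))
    (fun k _ => (Continuous.intervalIntegrable
      (continuous_const.mul (continuous_pow (e k)) : Continuous (fun t : ℝ => f k * t ^ (e k))) _ _))]
  refine Finset.sum_congr rfl fun k _ => ?_
  rw [intervalIntegral.integral_const_mul, integral_pow,
    zero_pow (Nat.succ_ne_zero (e k))]
  ring

lemma emc_int2_sum_monomial (f : ℕ → ℝ) (e : ℕ → ℕ) (n : ℕ) (r : ℝ) :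
    ∫ s in (0:ℝ)..r, ∫ t in (0:ℝ)..s, ∑ k ∈ range n, f k * t ^ (e k)
      = ∑ k ∈ range n, f k / ((e k + 1) * (e k + 2)) * r ^ (e k + 2) := by
  simp only [emc_int_sum_monomial f e n]
  rw [emc_int_sum_monomial (fun k => f k / (e k + 1)) (fun k => e k + 1) n r]
  refine Finset.sum_congr rfl fun k _ => ?_
  push_cast
  rw [div_div]
  ring_nf

noncomputable def emc_g (T h L0 a : ℝ) (n : ℕ) (t : ℝ) : ℝ :=
  (∑ k ∈ range (n+1), L0 * ((T/h^2)^k / (2*k).factorial) * t ^ (2*k))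
    - ∑ k ∈ range (n+1), a * ((T/h^2)^k / (2*k+1).factorial) * t ^ (2*k+1)

lemma emc_g_cont (T h L0 a : ℝ) (n : ℕ) : Continuous (emc_g T h L0 a n) := by
  unfold emc_g
  exact Continuous.sub
    (continuous_finset_sum _ fun k _ => continuous_const.mul (continuous_pow _))
    (continuous_finset_sum _ fun k _ => continuous_const.mul (continuous_pow _))

lemma emc_fact_cast (m : ℕ) : ((m+2).factorial : ℝ) = (m+2) * ((m+1) * m.factorial) := by
  rw [Nat.factorial_succ, Nat.factorial_succ]
  push_cast
  ring

lemma emc_g_double_integral (T h L0 a : ℝ) (hh : h ≠ 0) (n : ℕ) (r : ℝ) :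
    L0 - a * r + T * (h^2)⁻¹ * ∫ s in (0:ℝ)..r, ∫ t in (0:ℝ)..s, emc_g T h L0 a n t
      = emc_g T h L0 a (n+1) r := by
  have c1 : Continuous (fun t : ℝ => ∑ k ∈ range (n+1),
      L0 * ((T/h^2)^k / (2*k).factorial) * t ^ (2*k)) :=
    continuous_finset_sum _ fun k _ => continuous_const.mul (continuous_pow _)
  have c2 : Continuous (fun t : ℝ => ∑ k ∈ range (n+1),
      a * ((T/h^2)^k / (2*k+1).factorial) * t ^ (2*k+1)) :=
    continuous_finset_sum _ fun k _ => continuous_const.mul (continuous_pow _)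
  have hsub : ∀ s : ℝ, (∫ t in (0:ℝ)..s, emc_g T h L0 a n t)
      = (∫ t in (0:ℝ)..s, ∑ k ∈ range (n+1), L0 * ((T/h^2)^k / (2*k).factorial) * t ^ (2*k))
        - ∫ t in (0:ℝ)..s, ∑ k ∈ range (n+1), a * ((T/h^2)^k / (2*k+1).factorial) * t ^ (2*k+1) := by
    intro s
    unfold emc_g
    exact intervalIntegral.integral_sub (c1.intervalIntegrable _ _) (c2.intervalIntegrable _ _)
  have int1 : IntervalIntegrable (fun s : ℝ => ∫ t in (0:ℝ)..s,
      ∑ k ∈ range (n+1), L0 * ((T/h^2)^k / (2*k).factorial) * t ^ (2*k)) volume 0 r :=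
    (intervalIntegral.continuousOn_primitive_interval
      (c1.continuousOn.integrableOn_uIcc)).intervalIntegrable
  have int2 : IntervalIntegrable (fun s : ℝ => ∫ t in (0:ℝ)..s,
      ∑ k ∈ range (n+1), a * ((T/h^2)^k / (2*k+1).factorial) * t ^ (2*k+1)) volume 0 r :=
    (intervalIntegral.continuousOn_primitive_interval
      (c2.continuousOn.integrableOn_uIcc)).intervalIntegrable
  simp only [hsub]
  rw [intervalIntegral.integral_sub int1 int2]
  rw [emc_int2_sum_monomial (fun k => L0 * ((T/h^2)^k / (2*k).factorial)) (fun k => 2*k),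
    emc_int2_sum_monomial (fun k => a * ((T/h^2)^k / (2*k+1).factorial)) (fun k => 2*k+1)]
  unfold emc_g
  rw [Finset.sum_range_succ' (fun k => L0 * ((T/h^2)^k / (2*k).factorial) * r ^ (2*k)),
    Finset.sum_range_succ' (fun k => a * ((T/h^2)^k / (2*k+1).factorial) * r ^ (2*k+1))]
  simp only [Finset.mul_sum, mul_sub]
  have e1 : ∀ k : ℕ, T * (h^2)⁻¹ * ((L0 * ((T/h^2)^k / (2*k).factorial)) / ((((2*k:ℕ):ℝ)+1) * (((2*k:ℕ):ℝ)+2)) * r ^ (2*k+2))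
      = L0 * ((T/h^2)^(k+1) / (2*(k+1)).factorial) * r ^ (2*(k+1)) := by
    intro k
    have hf : ((2*(k+1)).factorial : ℝ) = ((2*k:ℕ)+2) * (((2*k:ℕ)+1) * (2*k).factorial) := by
      rw [show 2*(k+1) = 2*k+2 by ring]
      exact_mod_cast emc_fact_cast (2*k)
    have h0 : ((2*k).factorial : ℝ) ≠ 0 := by positivity
    have h1 : ((2*k:ℕ):ℝ) + 1 ≠ 0 := by positivity
    have h2 : ((2*k:ℕ):ℝ) + 2 ≠ 0 := by positivity
    rw [hf, pow_succ, show 2*(k+1) = 2*k+2 by ring]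
    push_cast
    field_simp
    linear_combination (-(T * T ^ k * L0 * h⁻¹ ^ (k * 2) * r ^ 2 * r ^ (k * 2))) * (mul_inv_cancel₀ (pow_ne_zero 2 hh) : h^2 * (h^2)⁻¹ = 1)
  have e2 : ∀ k : ℕ, T * (h^2)⁻¹ * ((a * ((T/h^2)^k / (2*k+1).factorial)) / ((((2*k+1:ℕ):ℝ)+1) * (((2*k+1:ℕ):ℝ)+2)) * r ^ (2*k+1+2))
      = a * ((T/h^2)^(k+1) / (2*(k+1)+1).factorial) * r ^ (2*(k+1)+1) := by
    intro k
    have hf : ((2*(k+1)+1).factorial : ℝ) = ((2*k+1:ℕ)+2) * (((2*k+1:ℕ)+1) * (2*k+1).factorial) := by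
      rw [show 2*(k+1)+1 = (2*k+1)+2 by ring]
      exact_mod_cast emc_fact_cast (2*k+1)
    have h0 : ((2*k+1).factorial : ℝ) ≠ 0 := by positivity
    rw [hf, pow_succ, show 2*(k+1)+1 = (2*k+1)+2 by ring]
    push_cast
    field_simp
    linear_combination (-(T * T ^ k * a * h⁻¹ ^ (k * 2) * r ^ 3 * r ^ (k * 2))) * (mul_inv_cancel₀ (pow_ne_zero 2 hh) : h^2 * (h^2)⁻¹ = 1)
  rw [Finset.sum_congr rfl (fun k _ => e1 k), Finset.sum_congr rfl (fun k _ => e2 k)]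
  norm_num [Nat.factorial]
  ring

lemma emc_aux_term (x : ℝ) (hx : 0 ≤ x) (k : ℕ) :
    x ^ (2*k+1) / (2*k+1).factorial
      ≤ x ^ (2*k) / (2*k).factorial + x ^ (2*(k+1)) / (2*(k+1)).factorial := by
  have h0 : (0:ℝ) < (2*k).factorial := by positivity
  have hf1 : ((2*k+1).factorial : ℝ) = ((2*k:ℕ)+1) * (2*k).factorial := by
    exact_mod_cast Nat.factorial_succ (2*k)
  have hf2 : ((2*(k+1)).factorial : ℝ) = ((2*k:ℕ)+2) * (((2*k:ℕ)+1) * (2*k).factorial) := by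
    rw [show 2*(k+1) = (2*k)+2 by ring, Nat.factorial_succ, Nat.factorial_succ]
    push_cast; ring
  have hy : (0:ℝ) ≤ x ^ (2*k) := pow_nonneg hx _
  have e1 : x ^ (2*k+1) = x ^ (2*k) * x := pow_succ x (2*k)
  have e2 : x ^ (2*(k+1)) = x ^ (2*k) * x^2 := by rw [show 2*(k+1) = 2*k+2 by ring, pow_add]
  rw [hf1, hf2, e1, e2, div_add_div _ _ (by positivity) (by positivity), div_le_div_iff₀ (by positivity) (by positivity)]
  have key : x ^ (2*k) * (x^2 - (2*(k:ℝ)+2)*x + ((k:ℝ)+1)^2) ≥ 0 := by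
    have : x^2 - (2*(k:ℝ)+2)*x + ((k:ℝ)+1)^2 = (x - ((k:ℝ)+1))^2 := by ring
    rw [this]
    exact mul_nonneg hy (sq_nonneg _)
  push_cast
  have c1 : (0:ℝ) ≤ ((2*k).factorial:ℝ)^2 * (2*(k:ℝ)+1) * (x ^ (2*k) * (x^2 - (2*(k:ℝ)+2)*x + ((k:ℝ)+1)^2)) :=
    mul_nonneg (by positivity) key
  have c2 : (0:ℝ) ≤ ((2*k).factorial:ℝ)^2 * (2*(k:ℝ)+1) * (x^(2*k) * (3*(k:ℝ)^2+4*(k:ℝ)+1)) := by positivity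
  nlinarith [c1, c2]

lemma emc_top_term (x : ℝ) (hx : 0 ≤ x) (N : ℕ) (hN : x ≤ 2*N+1) :
    x ^ (2*N+1) / (2*N+1).factorial ≤ x ^ (2*N) / (2*N).factorial := by
  have h0 : (0:ℝ) < (2*N).factorial := by positivity
  have hf1 : ((2*N+1).factorial : ℝ) = ((2*N:ℕ)+1) * (2*N).factorial := by
    exact_mod_cast Nat.factorial_succ (2*N)
  rw [hf1, pow_succ, div_le_div_iff₀ (by positivity) h0]
  have hy : (0:ℝ) ≤ x ^ (2*N) := pow_nonneg hx _
  push_cast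
  nlinarith [mul_nonneg hy (sub_nonneg.2 hN)]

lemma emc_sum_odd_le (x : ℝ) (hx : 0 ≤ x) (N : ℕ) (hN : x ≤ 2*N+1) :
    ∑ k ∈ range (N+1), x ^ (2*k+1) / (2*k+1).factorial
      ≤ 2 * ∑ k ∈ range (N+1), x ^ (2*k) / (2*k).factorial := by
  have step : ∑ k ∈ range N, x ^ (2*k+1) / (2*k+1).factorial
      ≤ ∑ k ∈ range N, (x ^ (2*k) / (2*k).factorial + x ^ (2*(k+1)) / (2*(k+1)).factorial) :=
    Finset.sum_le_sum fun k _ => emc_aux_term x hx k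
  have shift : ∑ k ∈ range N, x ^ (2*(k+1)) / (2*(k+1)).factorial
      = ∑ k ∈ range (N+1), x ^ (2*k) / (2*k).factorial - 1 := by
    rw [Finset.sum_range_succ' (fun k => x ^ (2*k) / (2*k).factorial) N]
    norm_num [Nat.factorial]
  have nn : ∀ k, (0:ℝ) ≤ x ^ (2*k) / (2*k).factorial := fun k => by positivity
  rw [Finset.sum_range_succ (fun k => x ^ (2*k+1) / (2*k+1).factorial) N,
    ]
  have peel : ∑ k ∈ range (N+1), x ^ (2*k) / (2*k).factorial
      = ∑ k ∈ range N, x ^ (2*k) / (2*k).factorial + x ^ (2*N) / (2*N).factorial :=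
    Finset.sum_range_succ _ N
  have htop := emc_top_term x hx N hN
  rw [Finset.sum_add_distrib, shift] at step
  have h1 : (0:ℝ) ≤ x ^ (2*0) / (2*0).factorial := nn 0
  nlinarith [step, htop, peel]

/- STATEMENT 13: the analytic core of the proof of Proposition 3.4: if L is continuous
   on [0, λh], satisfies 0 ≤ L ≤ Bh², and the second-order integral inequality
   L(r) ≥ L(0) − Bλ⁻¹hr + Th⁻²∫₀^r∫₀^s L(t) dt ds, then for λ large (depending only
   on T) one has L(0) ≤ (2/√T + 1)Bλ⁻¹h². -/


theorem exterior_mass_core (T : ℝ) (hT : 0 < T) :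
    ∃ lam₀ : ℝ, 1 ≤ lam₀ ∧
      ∀ lam : ℝ, lam₀ ≤ lam → ∀ h : ℝ, 0 < h → ∀ B : ℝ, 0 ≤ B →
        ∀ L : ℝ → ℝ, ContinuousOn L (Set.Icc 0 (lam * h)) →
          (∀ r ∈ Set.Icc (0 : ℝ) (lam * h), 0 ≤ L r ∧ L r ≤ B * h ^ 2) →
          (∀ r ∈ Set.Icc (0 : ℝ) (lam * h),
            L 0 - B * lam⁻¹ * h * r +
                T * (h ^ 2)⁻¹ * ∫ s in (0 : ℝ)..r, ∫ t in (0 : ℝ)..s, L t ≤ L r) →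
          L 0 ≤ (2 / Real.sqrt T + 1) * B * lam⁻¹ * h ^ 2 := by
  refine ⟨1 + 2/T, le_add_of_nonneg_right (by positivity), ?_⟩
  intro lam hlam h hh B hB L hLc hLb hLint
  have hT2 : 0 < Real.sqrt T := Real.sqrt_pos.2 hT
  have hlam1 : (1:ℝ) ≤ lam := le_trans (le_add_of_nonneg_right (by positivity)) hlam
  have hlam0 : (0:ℝ) < lam := lt_of_lt_of_le one_pos hlam1
  have hlamT : 2/T ≤ lam := le_trans (le_add_of_nonneg_left zero_le_one) hlam
  have hR : (0:ℝ) ≤ lam * h := by positivity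
  set a := B * lam⁻¹ * h with ha
  have hpos : (0:ℝ) ≤ T * (h^2)⁻¹ := by positivity
  -- key induction
  have key : ∀ n : ℕ, ∀ r ∈ Set.Icc (0:ℝ) (lam*h), emc_g T h (L 0) a n r ≤ L r := by
    intro n
    induction n with
    | zero =>
      intro r hr
      have hint := hLint r hr
      have hnn : 0 ≤ ∫ s in (0:ℝ)..r, ∫ t in (0:ℝ)..s, L t :=
        intervalIntegral.integral_nonneg hr.1 (fun s hs =>
          intervalIntegral.integral_nonneg hs.1 (fun t ht =>
            (hLb t ⟨ht.1, le_trans ht.2 (le_trans hs.2 hr.2)⟩).1))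
      have hg0 : emc_g T h (L 0) a 0 r = L 0 - a * r := by
        unfold emc_g; norm_num [Nat.factorial]
      rw [hg0]
      linarith [mul_nonneg hpos hnn]
    | succ n ih =>
      intro r hr
      have hint := hLint r hr
      have inner : ∀ s ∈ Set.Icc (0:ℝ) r,
          (∫ t in (0:ℝ)..s, emc_g T h (L 0) a n t) ≤ ∫ t in (0:ℝ)..s, L t := by
        intro s hs
        have hs2 : s ≤ lam * h := le_trans hs.2 hr.2
        refine intervalIntegral.integral_mono_on hs.1
          ((emc_g_cont T h (L 0) a n).intervalIntegrable _ _)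
          ((hLc.mono ?_).intervalIntegrable) ?_
        · rw [Set.uIcc_of_le hs.1]
          exact Set.Icc_subset_Icc le_rfl hs2
        · intro t ht
          exact ih t ⟨ht.1, le_trans ht.2 hs2⟩
      have hLr : IntegrableOn L (Set.uIcc 0 r) := by
        rw [Set.uIcc_of_le hr.1]
        exact (hLc.mono (Set.Icc_subset_Icc le_rfl hr.2)).integrableOn_Icc
      have outer : (∫ s in (0:ℝ)..r, ∫ t in (0:ℝ)..s, emc_g T h (L 0) a n t)
          ≤ ∫ s in (0:ℝ)..r, ∫ t in (0:ℝ)..s, L t := by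
        refine intervalIntegral.integral_mono_on hr.1 ?_ ?_ inner
        · exact (intervalIntegral.continuousOn_primitive_interval
            ((emc_g_cont T h (L 0) a n).continuousOn.integrableOn_uIcc)).intervalIntegrable
        · exact (intervalIntegral.continuousOn_primitive_interval hLr).intervalIntegrable
      rw [← emc_g_double_integral T h (L 0) a (ne_of_gt hh) n r]
      have hm := mul_le_mul_of_nonneg_left outer hpos
      linarith [hint, hm]
  -- specialize at r = lam * h
  set x := Real.sqrt T * lam with hxdef
  have hx : (0:ℝ) ≤ x := by positivity
  have hxpos : (0:ℝ) < x := by positivity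
  set N := ⌈x⌉₊ with hNdef
  have hN1 : 1 ≤ N := Nat.one_le_iff_ne_zero.2 (by
    simp only [hNdef, ne_eq, Nat.ceil_eq_zero, not_le]
    exact hxpos)
  have hxN : x ≤ 2*(N:ℝ)+1 := by
    have h1 := Nat.le_ceil x
    have h2 : (0:ℝ) ≤ (N:ℝ) := Nat.cast_nonneg N
    rw [← hNdef] at h1
    linarith
  have hx2 : x^2 = T * lam^2 := by
    rw [hxdef, mul_pow, Real.sq_sqrt hT.le]
  set cc := ∑ k ∈ range (N+1), x^(2*k) / (2*k).factorial with hccdef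
  set dd := ∑ k ∈ range (N+1), x^(2*k) / (2*k+1).factorial with hdddef
  have hgN : emc_g T h (L 0) a N (lam*h) = L 0 * cc - B * h^2 * dd := by
    unfold emc_g
    rw [hccdef, hdddef, Finset.mul_sum, Finset.mul_sum]
    refine congrArg₂ Sub.sub (Finset.sum_congr rfl fun k _ => ?_)
      (Finset.sum_congr rfl fun k _ => ?_)
    · have e : (T/h^2)^k * (lam*h)^(2*k) = x^(2*k) := by
        rw [pow_mul, pow_mul, ← mul_pow, hx2]
        congr 1
        field_simp
      rw [← e]
      ring
    · have e : (T/h^2)^k * (lam*h)^(2*k) = x^(2*k) := by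
        rw [pow_mul, pow_mul, ← mul_pow, hx2]
        congr 1
        field_simp
      have hA : a * (lam * h) = B * h^2 := by
        rw [ha]
        have hl : lam⁻¹ * lam = 1 := inv_mul_cancel₀ (ne_of_gt hlam0)
        linear_combination (B*h^2) * hl
      rw [← e, show (lam*h)^(2*k+1) = (lam*h)^(2*k) * (lam*h) from pow_succ _ _,
        show a * ((T/h^2)^k / ((2*k+1).factorial:ℝ)) * ((lam*h)^(2*k) * (lam*h))
          = (a * (lam * h)) * ((T/h^2)^k * (lam*h)^(2*k) / ((2*k+1).factorial:ℝ)) from by ring,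
        hA]
  have hfin := key N (lam*h) ⟨hR, le_rfl⟩
  have hub := (hLb (lam*h) ⟨hR, le_rfl⟩).2
  rw [hgN] at hfin
  have hmain : L 0 * cc - B * h^2 * dd ≤ B * h^2 := le_trans hfin hub
  -- facts about cc, dd
  have hterm_nn : ∀ k : ℕ, (0:ℝ) ≤ x^(2*k) / (2*k).factorial := fun k => by positivity
  have hcc1 : lam ≤ cc := by
    have hmem : 1 ∈ range (N+1) := Finset.mem_range.2 (by omega)
    have hsingle := Finset.single_le_sum (f := fun k => x^(2*k) / ((2*k).factorial:ℝ))
      (fun k _ => hterm_nn k) hmem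
    have hval : x^(2*1) / ((2*1).factorial:ℝ) = T * lam^2 / 2 := by
      rw [show 2*1 = 2 by rfl, hx2]
      norm_num [Nat.factorial]
    have hTlam : 2 ≤ T * lam := by
      rw [div_le_iff₀ hT] at hlamT
      linarith
    have : lam ≤ T * lam^2 / 2 := by nlinarith
    rw [hccdef]
    calc lam ≤ T * lam^2 / 2 := this
      _ = x^(2*1) / ((2*1).factorial:ℝ) := hval.symm
      _ ≤ _ := hsingle
  have hcc0 : (0:ℝ) < cc := lt_of_lt_of_le hlam0 hcc1
  have hdd_nn : (0:ℝ) ≤ dd := Finset.sum_nonneg fun k _ => by positivity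
  have hdd2 : x * dd ≤ 2 * cc := by
    have hsum := emc_sum_odd_le x hx N hxN
    have : x * dd = ∑ k ∈ range (N+1), x^(2*k+1) / (2*k+1).factorial := by
      rw [hdddef, Finset.mul_sum]
      exact Finset.sum_congr rfl fun k _ => by rw [pow_succ]; ring
    rw [this]
    exact hsum
  -- conclude
  have f1 : lam * dd ≤ (2/Real.sqrt T) * cc := by
    rw [div_mul_eq_mul_div, le_div_iff₀ hT2]
    calc lam * dd * Real.sqrt T = x * dd := by rw [hxdef]; ring
      _ ≤ 2 * cc := hdd2
  have f2 : B * lam⁻¹ * h^2 * (lam*dd + lam) ≤ B * lam⁻¹ * h^2 * ((2/Real.sqrt T)*cc + cc) :=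
    mul_le_mul_of_nonneg_left (by linarith) (by positivity)
  have f3 : B * lam⁻¹ * h^2 * (lam*dd + lam) = B * h^2 * (1 + dd) := by
    field_simp
    ring
  have h2 : B * h^2 * (1 + dd) ≤ ((2/Real.sqrt T + 1) * B * lam⁻¹ * h^2) * cc := by
    rw [← f3]
    calc B * lam⁻¹ * h^2 * (lam*dd + lam) ≤ B * lam⁻¹ * h^2 * ((2/Real.sqrt T)*cc + cc) := f2
      _ = ((2/Real.sqrt T + 1) * B * lam⁻¹ * h^2) * cc := by ring
  have hfinal : L 0 * cc ≤ ((2/Real.sqrt T + 1) * B * lam⁻¹ * h^2) * cc := by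
    have : L 0 * cc ≤ B * h^2 * (1 + dd) := by linarith
    linarith
  exact le_of_mul_le_mul_right hfinal hcc0
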